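/- Let X be a subshift over a finite alphabet Λ, let ξ ∈ Ω_X, let g ∈ ξ, and let β be a finite word. If gβ⁻¹ ∈ ξ, then the stem of ξ at g satisfies σ_g(ξ) ∈ F_β. Moreover, if ξ = ξ_x for some x ∈ X, then the converse holds: σ_g(ξ) ∈ F_β implies gβ⁻¹ ∈ ξ. -/

import Mathlib

open scoped Classical

namespace SubshiftPaper

variable {Λ : Type}

/-- The left shift on infinite words. -/
def shiftMap (x : ℕ → Λ) : ℕ → Λ := fun n => x (n + 1)

/-- Concatenation of a finite word with an infinite word. -/
def cat (α : List Λ) (y : ℕ → Λ) : ℕ → Λ := fun n => α.getD n (y (n - α.length))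

/-- `α` is a prefix of the infinite word `x`. -/
def Pref (α : List Λ) (x : ℕ → Λ) : Prop := ∀ (i : ℕ) (h : i < α.length), x i = α[i]

/-- The tail of `x` after `n` letters. -/
def tail (x : ℕ → Λ) (n : ℕ) : ℕ → Λ := fun i => x (n + i)

/-- `α` occurs in `x` at position `n`. -/
def OccursAt (α : List Λ) (x : ℕ → Λ) (n : ℕ) : Prop :=
  ∀ (i : ℕ) (h : i < α.length), x (n + i) = α[i]

/-- `α` occurs in `x` (as a contiguous block of letters). -/
def Occurs (α : List Λ) (x : ℕ → Λ) : Prop := ∃ n, OccursAt α x n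

/-- `X` is a subshift: a nonempty closed shift-invariant subset. -/
def IsSubshift [TopologicalSpace Λ] (X : Set (ℕ → Λ)) : Prop :=
  X.Nonempty ∧ IsClosed X ∧ ∀ x ∈ X, shiftMap x ∈ X

/-- The set of infinite words avoiding all words in `F`. -/
def ForbidSpace (F : Set (List Λ)) : Set (ℕ → Λ) := {x | ∀ α ∈ F, ¬ Occurs α x}

/-- `X` is a subshift of finite type. -/
def IsSFT (X : Set (ℕ → Λ)) : Prop := ∃ F : Set (List Λ), F.Finite ∧ X = ForbidSpace F

/-- The follower set of a finite word. -/
def follower (X : Set (ℕ → Λ)) (α : List Λ) : Set (ℕ → Λ) := {y | y ∈ X ∧ cat α y ∈ X}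

/-- The cylinder of a finite word. -/
def cylinder (X : Set (ℕ → Λ)) (α : List Λ) : Set (ℕ → Λ) := {x | x ∈ X ∧ Pref α x}

/-- The language of `X`. -/
def Language (X : Set (ℕ → Λ)) : Set (List Λ) := {α | ∃ x ∈ X, Occurs α x}

/-- The embedding of finite words into the free group. -/
def wd (α : List Λ) : FreeGroup Λ := (α.map FreeGroup.of).prod

/-- Indicator function of a set of group elements. -/
noncomputable def chi (s : Set (FreeGroup Λ)) : FreeGroup Λ → Bool :=
  fun g => if g ∈ s then true else false

/-- The set `ξ_x ⊆ 𝔽`. -/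
def xiSet [DecidableEq Λ] (X : Set (ℕ → Λ)) (x : ℕ → Λ) : Set (FreeGroup Λ) :=
  {g | ∃ α β : List Λ, g = wd α * (wd β)⁻¹ ∧
        FreeGroup.norm g = α.length + β.length ∧
        Pref α x ∧ tail x α.length ∈ follower X α ∩ follower X β}

/-- `ξ_x` as an element of `2^𝔽`. -/
noncomputable def xiB [DecidableEq Λ] (X : Set (ℕ → Λ)) (x : ℕ → Λ) : FreeGroup Λ → Bool :=
  chi (xiSet X x)

/-- The spectrum `Ω_X`: the closure of `{ξ_x : x ∈ X}` in `2^𝔽`. -/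
noncomputable def Omega [DecidableEq Λ] (X : Set (ℕ → Λ)) : Set (FreeGroup Λ → Bool) :=
  closure ((fun x => xiB X x) '' X)

/-- Left translation of an element of `2^𝔽`. -/
def translate (g : FreeGroup Λ) (ξ : FreeGroup Λ → Bool) : FreeGroup Λ → Bool :=
  fun h => ξ (g⁻¹ * h)

/-- `x` is the stem of `ξ`: `ξ ∩ 𝔽₊` is exactly the set of prefixes of `x`. -/
def IsStem (ξ : FreeGroup Λ → Bool) (x : ℕ → Λ) : Prop :=
  {g | ξ g = true} ∩ {g | ∃ α : List Λ, g = wd α} =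
    {g | ∃ α : List Λ, g = wd α ∧ Pref α x}

/-- `x` is the stem of `ξ` at `g`: `ξ ∩ g𝔽₊ = {gα : α is a prefix of x}`. -/
def IsStemAt (ξ : FreeGroup Λ → Bool) (g : FreeGroup Λ) (x : ℕ → Λ) : Prop :=
  {h | ξ h = true} ∩ {h | ∃ α : List Λ, h = g * wd α} =
    {h | ∃ α : List Λ, h = g * wd α ∧ Pref α x}

/-- The orbit of `ξ` under the spectral partial action. -/
def Orbit (ξ : FreeGroup Λ → Bool) : Set (FreeGroup Λ → Bool) :=
  {η | ∃ g : FreeGroup Λ, ξ g⁻¹ = true ∧ η = translate g ξ}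

/-- Topological freeness of the spectral partial action. -/
noncomputable def TopFree [DecidableEq Λ] (X : Set (ℕ → Λ)) : Prop :=
  ∀ g : FreeGroup Λ, g ≠ 1 →
    ∀ U : Set (FreeGroup Λ → Bool), IsOpen U →
      (U ∩ Omega X ⊆ {ξ | ξ g⁻¹ = true ∧ translate g ξ = ξ}) → U ∩ Omega X = ∅

/-- The periodic infinite word `γ^∞`. -/
noncomputable def perInf [Nonempty Λ] (γ : List Λ) : ℕ → Λ :=
  fun n => γ.getD (n % γ.length) (Classical.arbitrary Λ)

/-- `n`-fold concatenation of a finite word with itself. -/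
def rep : ℕ → List Λ → List Λ
  | 0, _ => []
  | n + 1, γ => γ ++ rep n γ

/-- `γ` is a circuit relative to `X`. -/
noncomputable def IsCircuit [Nonempty Λ] (X : Set (ℕ → Λ)) (γ : List Λ) : Prop :=
  γ ≠ [] ∧ perInf γ ∈ X

/-- `y` is an exit for the circuit `γ`. -/
noncomputable def IsExit [Nonempty Λ] (X : Set (ℕ → Λ)) (γ : List Λ) (y : ℕ → Λ) : Prop :=
  y ≠ perInf γ ∧ cat γ y ∈ X

/-- `z` is a strong exit for the circuit `γ`. -/
noncomputable def IsStrongExit [Nonempty Λ] (X : Set (ℕ → Λ)) (γ : List Λ) (z : ℕ → Λ) : Prop :=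
  z ≠ perInf γ ∧ ∀ n : ℕ, cat (rep n γ) z ∈ X

/-- The sets `X_g` of the standard partial action. -/
def Xg [DecidableEq Λ] (X : Set (ℕ → Λ)) (g : FreeGroup Λ) : Set (ℕ → Λ) :=
  {x | ∃ α β : List Λ, g = wd α * (wd β)⁻¹ ∧
        FreeGroup.norm g = α.length + β.length ∧
        ∃ y ∈ follower X α ∩ follower X β, x = cat α y}

/-- `x` is a fixed point for `θ_g`. -/
def IsThetaFixed [DecidableEq Λ] (X : Set (ℕ → Λ)) (g : FreeGroup Λ) (x : ℕ → Λ) : Prop :=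
  ∃ α β : List Λ, g = wd α * (wd β)⁻¹ ∧
    FreeGroup.norm g = α.length + β.length ∧
    ∃ y ∈ follower X α ∩ follower X β, x = cat β y ∧ cat α y = x

/-- `x` may be collectively reached from the finite set `B`. -/
def CollReached (X : Set (ℕ → Λ)) (B : Finset (List Λ)) (x : ℕ → Λ) : Prop :=
  ∃ α γ : List Λ, Pref α x ∧ ∀ β ∈ B, cat (β ++ γ) (tail x α.length) ∈ X

/-- `X` is collectively cofinal. -/
def CollCofinal (X : Set (ℕ → Λ)) : Prop :=
  ∀ B : Finset (List Λ), ↑B ⊆ Language X → (⋂ β ∈ B, follower X β).Nonempty →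
    ∀ x ∈ X, CollReached X B x

/-- `X` is strongly cofinal. -/
def StrongCofinal (X : Set (ℕ → Λ)) : Prop :=
  ∀ β ∈ Language X, ∃ M : ℕ, ∀ x ∈ X, ∃ α γ : List Λ, Pref α x ∧
    cat (β ++ γ) (tail x α.length) ∈ X ∧ α.length + γ.length ≤ M

/-- The even shift. -/
def evenShift : Set (ℕ → Fin 2) :=
  ForbidSpace {w | ∃ n : ℕ, w = 0 :: (List.replicate (2 * n + 1) 1 ++ [0])}



section Aux

def posL (α : List Λ) : List (Λ × Bool) := α.map (fun a => (a, true))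
def negL (β : List Λ) : List (Λ × Bool) := (β.map (fun b => (b, false))).reverse
def Wrd (α β : List Λ) : List (Λ × Bool) := posL α ++ negL β

lemma wd_nil : wd ([] : List Λ) = 1 := rfl
lemma wd_cons (a : Λ) (α : List Λ) : wd (a :: α) = FreeGroup.of a * wd α := by
  simp [wd]
lemma wd_append (α β : List Λ) : wd (α ++ β) = wd α * wd β := by
  simp [wd]

lemma wd_eq_mk (α : List Λ) : wd α = FreeGroup.mk (posL α) := by
  induction α with
  | nil => rfl
  | cons a α ih =>
      rw [wd_cons, ih, FreeGroup.of, FreeGroup.mul_mk]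
      rfl

lemma invRev_posL (β : List Λ) : FreeGroup.invRev (posL β) = negL β := by
  simp [FreeGroup.invRev, posL, negL, Function.comp_def]

lemma wd_sub_eq_mk (α β : List Λ) : wd α * (wd β)⁻¹ = FreeGroup.mk (Wrd α β) := by
  rw [wd_eq_mk, wd_eq_mk, FreeGroup.inv_mk, invRev_posL, FreeGroup.mul_mk, Wrd]

/-- no cancelling adjacent pair -/
def NoCan (L : List (Λ × Bool)) : Prop :=
  List.Chain' (fun p q => ¬(p.1 = q.1 ∧ q.2 = !p.2)) L

lemma reduce_eq_self_of_noCan [DecidableEq Λ] {L : List (Λ × Bool)} (h : NoCan L) :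
    FreeGroup.reduce L = L := by
  rcases (Relation.ReflTransGen.cases_head (FreeGroup.reduce.red (L := L))) with h1 | ⟨L', hs, _⟩
  · exact h1.symm
  · exfalso
    cases hs with
    | @not L1 L2 x b =>
        have := (List.isChain_append.1 h).2.2
        rcases List.exists_cons_of_ne_nil (l := L1 ++ (x,b) :: (x,!b) :: L2) (by simp) with _
        have h2 : List.Chain' (fun p q : Λ × Bool => ¬(p.1 = q.1 ∧ q.2 = !p.2)) ((x,b) :: (x,!b) :: L2) :=
          (List.isChain_append.1 h).2.1
        exact (List.isChain_cons_cons.1 h2).1 ⟨rfl, rfl⟩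

lemma toWord_mk_of_noCan [DecidableEq Λ] {L : List (Λ × Bool)} (h : NoCan L) :
    (FreeGroup.mk L).toWord = L := by
  rw [FreeGroup.toWord_mk, reduce_eq_self_of_noCan h]

lemma norm_mk_of_noCan [DecidableEq Λ] {L : List (Λ × Bool)} (h : NoCan L) :
    FreeGroup.norm (FreeGroup.mk L) = L.length := by
  rw [FreeGroup.norm, toWord_mk_of_noCan h]

lemma toWord_mk_of_norm [DecidableEq Λ] {L : List (Λ × Bool)}
    (h : FreeGroup.norm (FreeGroup.mk L) = L.length) :
    (FreeGroup.mk L).toWord = L := by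
  have h1 : List.Sublist (FreeGroup.reduce L) L := FreeGroup.Red.sublist (FreeGroup.reduce.red)
  have h2 : (FreeGroup.reduce L).length = L.length := by
    rw [← h, FreeGroup.norm, FreeGroup.toWord_mk]
  rw [FreeGroup.toWord_mk]
  exact h1.eq_of_length h2



lemma noCan_of_const {c : Bool} {L : List (Λ × Bool)} (h : ∀ p ∈ L, p.2 = c) : NoCan L := by
  apply List.Pairwise.isChain
  apply List.pairwise_of_forall_mem_list
  intro p hp q hq
  rw [h p hp, h q hq]
  rintro ⟨-, hb⟩
  exact (Bool.not_ne_self c) hb.symm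

lemma noCan_posL (α : List Λ) : NoCan (posL α) := by
  apply noCan_of_const (c := true); intro p hp
  rcases List.mem_map.1 hp with ⟨a, -, rfl⟩; rfl

lemma noCan_negL (β : List Λ) : NoCan (negL β) := by
  apply noCan_of_const (c := false); intro p hp
  rw [negL, List.mem_reverse] at hp
  rcases List.mem_map.1 hp with ⟨a, -, rfl⟩; rfl

lemma posL_getLast? (α : List Λ) : (posL α).getLast? = α.getLast?.map (fun a => (a, true)) :=
  List.getLast?_map

lemma posL_head? (α : List Λ) : (posL α).head? = α.head?.map (fun a => (a, true)) :=
  List.head?_map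

lemma negL_head? (β : List Λ) : (negL β).head? = β.getLast?.map (fun b => (b, false)) := by
  rw [negL, List.head?_reverse, List.getLast?_map]

lemma negL_getLast? (β : List Λ) : (negL β).getLast? = β.head?.map (fun b => (b, false)) := by
  rw [negL, List.getLast?_reverse, List.head?_map]

/-- the no-cancellation junction condition -/
def Junct (α β : List Λ) : Prop := ∀ a ∈ α.getLast?, ∀ b ∈ β.getLast?, a ≠ b

lemma noCan_Wrd {α β : List Λ} (h : Junct α β) : NoCan (Wrd α β) := by
  rw [Wrd, NoCan, List.Chain', List.isChain_append]
  refine ⟨noCan_posL α, noCan_negL β, ?_⟩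
  intro p hp q hq
  rw [posL_getLast?, Option.mem_map] at hp
  rw [negL_head?, Option.mem_map] at hq
  rcases hp with ⟨a, ha, rfl⟩
  rcases hq with ⟨b, hb, rfl⟩
  rintro ⟨h1, -⟩
  exact h a ha b hb h1

lemma norm_wd_sub_of_junct [DecidableEq Λ] {α β : List Λ} (h : Junct α β) :
    FreeGroup.norm (wd α * (wd β)⁻¹) = α.length + β.length := by
  rw [wd_sub_eq_mk, norm_mk_of_noCan (noCan_Wrd h)]
  simp [Wrd, posL, negL]

lemma Wrd_inj {a b c d : List Λ} (h : Wrd a b = Wrd c d) : a = c ∧ b = d := by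
  have key : ∀ e : List Λ, ∀ f : List Λ, (Wrd e f).takeWhile (fun p => p.2) = posL e := by
    intro e
    induction e with
    | nil =>
        intro f
        rw [Wrd, posL, List.map_nil, List.nil_append, List.takeWhile_eq_nil_iff]
        intro hl hp
        have : (negL f).get ⟨0, hl⟩ ∈ negL f := (negL f).get_mem ⟨0, hl⟩
        have this2 : (negL f).get ⟨0, hl⟩ ∈ (f.map (fun b => (b, false))).reverse := this
        rw [List.mem_reverse] at this2
        rcases List.mem_map.1 this2 with ⟨x, -, hx⟩
        rw [← hx] at hp
        exact Bool.false_ne_true (by simp at hp)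
    | cons x e ih =>
        intro f
        have : Wrd (x :: e) f = (x, true) :: Wrd e f := rfl
        rw [this, List.takeWhile_cons_of_pos (by rfl), ih f]
        rfl
  have h1 : posL a = posL c := by rw [← key a b, ← key c d, h]
  have ha : a = c := by
    have := List.map_injective_iff.2 (fun x y hxy => (Prod.mk.injEq _ _ _ _ ▸ hxy : _ ∧ _).1) h1
    exact this
  refine ⟨ha, ?_⟩
  rw [Wrd, Wrd, ha, List.append_cancel_left_eq] at h
  have hb : b.map (fun b => (b, false)) = d.map (fun b => (b, false)) := by
    have := congrArg List.reverse h
    simpa [negL] using this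
  exact List.map_injective_iff.2 (fun x y hxy => (Prod.mk.injEq _ _ _ _ ▸ hxy : _ ∧ _).1) hb

lemma wd_inj {a b : List Λ} (h : wd a = wd b) : a = b := by
  classical
  have h1 : (wd a).toWord = (wd b).toWord := by rw [h]
  rw [wd_eq_mk, wd_eq_mk, toWord_mk_of_noCan (noCan_posL a), toWord_mk_of_noCan (noCan_posL b)] at h1
  exact List.map_injective_iff.2 (fun x y hxy => (Prod.mk.injEq _ _ _ _ ▸ hxy : _ ∧ _).1) h1

/-- canonical decompositions are unique -/
lemma decomp_unique [DecidableEq Λ] {g : FreeGroup Λ} {a b c d : List Λ}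
    (h1 : g = wd a * (wd b)⁻¹) (h2 : FreeGroup.norm g = a.length + b.length)
    (h3 : g = wd c * (wd d)⁻¹) (h4 : FreeGroup.norm g = c.length + d.length) :
    a = c ∧ b = d := by
  have e1 : g.toWord = Wrd a b := by
    rw [h1, wd_sub_eq_mk]
    apply toWord_mk_of_norm
    rw [← wd_sub_eq_mk, ← h1, h2]; simp [Wrd, posL, negL]
  have e2 : g.toWord = Wrd c d := by
    rw [h3, wd_sub_eq_mk]
    apply toWord_mk_of_norm
    rw [← wd_sub_eq_mk, ← h3, h4]; simp [Wrd, posL, negL]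
  exact Wrd_inj (e1 ▸ e2 : Wrd a b = Wrd c d)



def Wrd3 (α δ γ : List Λ) : List (Λ × Bool) := posL α ++ negL δ ++ posL γ

lemma wd3_eq_mk (α δ γ : List Λ) :
    wd α * (wd δ)⁻¹ * wd γ = FreeGroup.mk (Wrd3 α δ γ) := by
  rw [wd_sub_eq_mk, wd_eq_mk γ, FreeGroup.mul_mk, Wrd3, Wrd]

lemma noCan_Wrd3 {α δ γ : List Λ} (h1 : Junct α δ)
    (h2 : ∀ d ∈ δ.head?, ∀ g ∈ γ.head?, d ≠ g) : NoCan (Wrd3 α δ γ) := by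
  rw [Wrd3, NoCan, List.Chain', List.isChain_append]
  refine ⟨noCan_Wrd h1, noCan_posL γ, ?_⟩
  intro p hp q hq
  rcases Option.mem_map.1 ((posL_head? γ) ▸ hq : q ∈ γ.head?.map _) with ⟨gg, hg, rfl⟩
  cases hδ : δ with
  | nil =>
      rw [hδ] at hp
      have hp2 : p ∈ (posL α).getLast? := by simpa [negL] using hp
      rcases Option.mem_map.1 ((posL_getLast? α) ▸ hp2 : p ∈ α.getLast?.map _) with ⟨x, -, rfl⟩
      rintro ⟨-, hb⟩
      simp at hb
  | cons d δ' =>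
      have hne : negL δ ≠ [] := by
        rw [hδ]; intro hc
        have := congrArg List.length hc
        simp [negL] at this
      rw [List.getLast?_append_of_ne_nil _ hne, negL_getLast?] at hp
      rcases Option.mem_map.1 hp with ⟨x, hx, rfl⟩
      rintro ⟨hfst, -⟩
      exact h2 x hx gg hg hfst

/-- the snd-monotone relation -/
def Rmono (p q : Λ × Bool) : Prop := p.2 = true ∨ q.2 = false

lemma chainR_Wrd (a b : List Λ) : List.Chain' (Rmono (Λ := Λ)) (Wrd a b) := by
  rw [Wrd, List.Chain', List.isChain_append]
  refine ⟨?_, ?_, ?_⟩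
  · apply List.Pairwise.isChain
    apply List.pairwise_of_forall_mem_list
    intro p hp q hq
    left
    rcases List.mem_map.1 hp with ⟨x, -, rfl⟩; rfl
  · apply List.Pairwise.isChain
    apply List.pairwise_of_forall_mem_list
    intro p hp q hq
    right
    have : q ∈ (b.map (fun x => (x, false))).reverse := hq
    rw [List.mem_reverse] at this
    rcases List.mem_map.1 this with ⟨x, -, rfl⟩; rfl
  · intro p hp q hq
    left
    rcases Option.mem_map.1 ((posL_getLast? a) ▸ hp : p ∈ a.getLast?.map _) with ⟨x, -, rfl⟩; rfl

lemma not_chainR_Wrd3 {α δ γ : List Λ} (hδ : δ ≠ []) (hγ : γ ≠ []) :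
    ¬ List.Chain' (Rmono (Λ := Λ)) (Wrd3 α δ γ) := by
  intro h
  rw [Wrd3, List.Chain', List.isChain_append] at h
  have hj := h.2.2
  have h1 : (δ.head?.map (fun b => (b, false))).isSome := by
    cases δ with | nil => exact absurd rfl hδ | cons d δ' => rfl
  have h2 : (γ.head?.map (fun a => (a, true))).isSome := by
    cases γ with | nil => exact absurd rfl hγ | cons d δ' => rfl
  rcases Option.isSome_iff_exists.1 h1 with ⟨p, hp⟩
  rcases Option.isSome_iff_exists.1 h2 with ⟨q, hq⟩
  have hpL : p ∈ (posL α ++ negL δ).getLast? := by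
    rw [List.getLast?_append_of_ne_nil]
    · rw [negL_getLast?]; exact hp
    · intro hc
      have := congrArg List.length hc
      simp [negL] at this
      exact hδ this
  have hqH : q ∈ (posL γ).head? := by rw [posL_head?]; exact hq
  have := hj p hpL q hqH
  rcases Option.mem_map.1 (Option.mem_def.2 hp : p ∈ δ.head?.map _) with ⟨x, -, rfl⟩
  rcases Option.mem_map.1 (Option.mem_def.2 hq : q ∈ γ.head?.map _) with ⟨y, -, rfl⟩
  rcases this with h | h
  · exact Bool.false_ne_true h
  · simp at h

lemma Wrd3_ne_Wrd {α δ γ a b : List Λ} (hδ : δ ≠ []) (hγ : γ ≠ []) :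
    Wrd3 α δ γ ≠ Wrd a b := by
  intro h
  exact not_chainR_Wrd3 hδ hγ (h ▸ chainR_Wrd a b)



lemma prefix_trichotomy (δ γ : List Λ) :
    γ <+: δ ∨ (∃ γ', γ = δ ++ γ') ∨
      (∃ t d g δ' γ', δ = t ++ d :: δ' ∧ γ = t ++ g :: γ' ∧ d ≠ g) := by
  induction δ generalizing γ with
  | nil => exact Or.inr (Or.inl ⟨γ, rfl⟩)
  | cons d δ₀ ih =>
      cases γ with
      | nil => exact Or.inl (List.nil_prefix)
      | cons g γ₀ =>
          by_cases hdg : d = g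
          · subst hdg
            rcases ih γ₀ with h | ⟨γ', rfl⟩ | ⟨t, d', g', δ', γ', h1, h2, h3⟩
            · exact Or.inl (List.cons_prefix_cons.2 ⟨rfl, h⟩)
            · exact Or.inr (Or.inl ⟨γ', rfl⟩)
            · exact Or.inr (Or.inr ⟨d :: t, d', g', δ', γ', by rw [h1]; rfl, by rw [h2]; rfl, h3⟩)
          · exact Or.inr (Or.inr ⟨[], d, g, δ₀, γ₀, rfl, rfl, hdg⟩)

lemma junct_nil_right (α : List Λ) : Junct α [] := by
  intro a _ b hb; simp at hb

lemma junct_nil_left (β : List Λ) : Junct [] β := by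
  intro a ha; simp at ha

lemma suffix_split (α β : List Λ) :
    ∃ α₀ β₀ t, α = α₀ ++ t ∧ β = β₀ ++ t ∧ Junct α₀ β₀ := by
  rcases prefix_trichotomy α.reverse β.reverse with h | ⟨γ', hγ'⟩ | ⟨t, d, g, δ', γ', h1, h2, h3⟩
  · rcases h with ⟨s, hs⟩
    refine ⟨s.reverse, [], β, ?_, by simp, junct_nil_right _⟩
    have := congrArg List.reverse hs
    simp at this
    exact this.symm
  · refine ⟨[], γ'.reverse, α, by simp, ?_, junct_nil_left _⟩
    have := congrArg List.reverse hγ'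
    simp at this
    exact this
  · refine ⟨δ'.reverse ++ [d], γ'.reverse ++ [g], t.reverse, ?_, ?_, ?_⟩
    · have := congrArg List.reverse h1; simp at this ⊢; exact this
    · have := congrArg List.reverse h2; simp at this ⊢; exact this
    · intro a ha b hb
      simp at ha hb
      rw [← ha, ← hb]
      exact h3

section CatLemmas
variable {Λ : Type}

lemma cat_nil (y : ℕ → Λ) : cat [] y = y := by
  funext n; simp [cat]

lemma cat_eval_lt {α : List Λ} {y : ℕ → Λ} {n : ℕ} (h : n < α.length) :
    cat α y n = α[n] := List.getD_eq_getElem _ _ h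

lemma cat_eval_ge {α : List Λ} {y : ℕ → Λ} {n : ℕ} (h : α.length ≤ n) :
    cat α y n = y (n - α.length) := List.getD_eq_default _ _ (by omega)

lemma cat_append (a b : List Λ) (y : ℕ → Λ) : cat (a ++ b) y = cat a (cat b y) := by
  funext n
  by_cases h1 : n < a.length
  · rw [cat_eval_lt (by simp; omega), cat_eval_lt h1, List.getElem_append_left h1]
  · push_neg at h1
    rw [cat_eval_ge h1]
    by_cases h2 : n < a.length + b.length
    · rw [cat_eval_lt (by simp; omega), cat_eval_lt (by omega),
        List.getElem_append_right (by omega)]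
    · push_neg at h2
      rw [cat_eval_ge (by simp; omega), cat_eval_ge (by omega)]
      congr 1
      simp
      omega

lemma tail_cat (a : List Λ) (y : ℕ → Λ) : tail (cat a y) a.length = y := by
  funext i
  rw [tail, cat_eval_ge (by omega)]
  congr 1
  omega

lemma tail_zero (x : ℕ → Λ) : tail x 0 = x := by funext i; simp [tail]

lemma tail_tail (x : ℕ → Λ) (n m : ℕ) : tail (tail x n) m = tail x (n + m) := by
  funext i; simp [tail]; congr 1; omega

lemma pref_cat (a : List Λ) (y : ℕ → Λ) : Pref a (cat a y) := by
  intro i h; exact cat_eval_lt h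

lemma cat_pref_eq {a : List Λ} {x : ℕ → Λ} (h : Pref a x) : cat a (tail x a.length) = x := by
  funext n
  by_cases h1 : n < a.length
  · rw [cat_eval_lt h1]; exact (h n h1).symm
  · rw [cat_eval_ge (by omega), tail]
    congr 1
    omega

lemma pref_append {a b : List Λ} {x : ℕ → Λ} :
    Pref (a ++ b) x ↔ Pref a x ∧ Pref b (tail x a.length) := by
  constructor
  · intro h
    refine ⟨fun i hi => ?_, fun i hi => ?_⟩
    · rw [h i (by simp; omega), List.getElem_append_left hi]
    · rw [tail, h (a.length + i) (by simp; omega), List.getElem_append_right (by omega)]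
      congr 1
      omega
  · rintro ⟨h1, h2⟩ i hi
    by_cases h3 : i < a.length
    · rw [List.getElem_append_left h3]; exact h1 i h3
    · rw [List.getElem_append_right (by omega)]
      have := h2 (i - a.length) (by simp at hi; omega)
      rw [tail] at this
      rw [← this]
      congr 1
      omega

lemma pref_of_prefix {a b : List Λ} {x : ℕ → Λ} (h : a <+: b) (hb : Pref b x) : Pref a x := by
  rcases h with ⟨c, rfl⟩
  exact (pref_append.1 hb).1

lemma pref_ofFn {y : ℕ → Λ} (n : ℕ) : Pref (List.ofFn fun i : Fin n => y i) y := by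
  intro i hi
  simp at hi ⊢

lemma tail_shift {Λ : Type} [TopologicalSpace Λ] {X : Set (ℕ → Λ)} (hX : IsSubshift X)
    {x : ℕ → Λ} (hx : x ∈ X) (n : ℕ) : tail x n ∈ X := by
  induction n with
  | zero => rw [tail_zero]; exact hx
  | succ n ih =>
      have : tail x (n + 1) = shiftMap (tail x n) := by
        funext i; simp [tail, shiftMap]; congr 1; omega
      rw [this]
      exact hX.2.2 _ ih

end CatLemmas

section TopLemmas
variable {Λ : Type}

lemma closed_approx [TopologicalSpace Λ] [DiscreteTopology Λ] {X : Set (ℕ → Λ)}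
    (hX : IsClosed X) {y : ℕ → Λ} (h : ∀ n : ℕ, ∃ w ∈ X, ∀ i < n, w i = y i) : y ∈ X := by
  choose w hwX hw using h
  have ht : Filter.Tendsto w Filter.atTop (nhds y) := by
    rw [tendsto_pi_nhds]
    intro i
    apply tendsto_nhds_of_eventually_eq
    filter_upwards [Filter.eventually_ge_atTop (i + 1)] with n hn
    exact hw n i (by omega)
  exact hX.mem_of_tendsto ht (Filter.Eventually.of_forall hwX)

lemma omega_approx [DecidableEq Λ] {X : Set (ℕ → Λ)} {ξ : FreeGroup Λ → Bool}
    (hξ : ξ ∈ Omega X) (s : Finset (FreeGroup Λ)) :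
    ∃ x ∈ X, ∀ h ∈ s, xiB X x h = ξ h := by
  have hU : IsOpen {η : FreeGroup Λ → Bool | ∀ h ∈ s, η h = ξ h} := by
    have : {η : FreeGroup Λ → Bool | ∀ h ∈ s, η h = ξ h} =
        ⋂ h ∈ s, (fun η : FreeGroup Λ → Bool => η h) ⁻¹' {ξ h} := by
      ext η; simp [Set.mem_iInter]
    rw [this]
    exact isOpen_biInter_finset fun h _ =>
      (continuous_apply h).isOpen_preimage _ (isOpen_discrete _)
  have := mem_closure_iff.1 hξ _ hU (fun h _ => rfl)
  rcases this with ⟨η, hη1, x, hx, rfl⟩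
  exact ⟨x, hx, hη1⟩

lemma xiB_eq_true {X : Set (ℕ → Λ)} [DecidableEq Λ] {x : ℕ → Λ} {g : FreeGroup Λ} :
    xiB X x g = true ↔ g ∈ xiSet X x := by
  simp [xiB, chi]

end TopLemmas

section XiLemmas
variable {Λ : Type} [DecidableEq Λ]

lemma junct_of_norm {α δ : List Λ}
    (h : FreeGroup.norm (wd α * (wd δ)⁻¹) = α.length + δ.length) : Junct α δ := by
  intro a ha b hb hab
  rw [Option.mem_def] at ha hb
  subst hab
  obtain ⟨α₁, rfl⟩ := List.getLast?_eq_some_iff.1 ha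
  obtain ⟨δ₁, rfl⟩ := List.getLast?_eq_some_iff.1 hb
  have he : wd (α₁ ++ [a]) * (wd (δ₁ ++ [a]))⁻¹ = wd α₁ * (wd δ₁)⁻¹ := by
    rw [wd_append, wd_append, mul_inv_rev]
    group
  have hle : FreeGroup.norm (wd α₁ * (wd δ₁)⁻¹) ≤ α₁.length + δ₁.length := by
    rw [wd_sub_eq_mk]
    have := FreeGroup.norm_mk_le (L₁ := Wrd α₁ δ₁)
    simpa [Wrd, posL, negL] using this
  rw [he] at h
  simp at h
  omega

lemma junct_suffix {α δ γ δ'' : List Λ} (h : Junct α δ) (hδ : δ = γ ++ δ'') :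
    Junct α δ'' := by
  intro a ha b hb
  apply h a ha b
  rw [hδ, List.getLast?_append_of_ne_nil]
  · exact hb
  · intro hc; rw [hc] at hb; simp at hb

lemma prefix_of_pref_agree {γ δ : List Λ} {w : ℕ → Λ} (h1 : Pref γ w) (h2 : Pref δ w)
    (hlen : γ.length ≤ δ.length) : γ <+: δ := by
  refine ⟨δ.drop γ.length, ?_⟩
  apply List.ext_getElem (by simp; omega)
  intro i hi1 hi2
  by_cases h3 : i < γ.length
  · rw [List.getElem_append_left h3, ← h1 i h3, h2 i (by omega)]
  · rw [List.getElem_append_right (by omega), List.getElem_drop]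
    congr 1
    omega

/-- forward structure lemma: elements of `ξ_x ∩ g𝔽₊` are prefixes of `cat δ z`. -/
lemma xi_fwd [TopologicalSpace Λ] {X : Set (ℕ → Λ)} (hX : IsSubshift X) {x : ℕ → Λ}
    {g : FreeGroup Λ} {α δ : List Λ}
    (hαδ : g = wd α * (wd δ)⁻¹) (hnorm : FreeGroup.norm g = α.length + δ.length)
    {γ : List Λ} (hmem : g * wd γ ∈ xiSet X x) :
    Pref γ (cat δ (tail x α.length)) := by
  set z := tail x α.length with hzdef
  rcases prefix_trichotomy δ γ with hpre | ⟨γ', rfl⟩ | ⟨t, d, g', δ', γ', hd, hg', hne⟩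
  · exact pref_of_prefix hpre (pref_cat δ z)
  · -- γ = δ ++ γ'
    obtain ⟨α', β', he, hn, hp', hz'⟩ := hmem
    have he2 : g * wd (δ ++ γ') = wd (α ++ γ') * (wd [])⁻¹ := by
      rw [hαδ, wd_append, wd_append, wd_nil]
      group
    have hn2 : FreeGroup.norm (g * wd (δ ++ γ')) = (α ++ γ').length + ([] : List Λ).length := by
      rw [he2, norm_wd_sub_of_junct (junct_nil_right _)]
    obtain ⟨ha, -⟩ := decomp_unique he hn he2 hn2
    rw [ha] at hp'
    have hγ' : Pref γ' z := by
      rw [hzdef]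
      exact (pref_append.1 hp').2
    rw [pref_append]
    refine ⟨pref_cat δ z, ?_⟩
    rw [tail_cat]
    exact hγ'
  · -- impossible mismatch case
    exfalso
    obtain ⟨α', β', he, hn, -, -⟩ := hmem
    have he2 : g * wd γ = FreeGroup.mk (Wrd3 α (d :: δ') (g' :: γ')) := by
      rw [← wd3_eq_mk, hαδ, hd, hg', wd_append, wd_append, mul_inv_rev]
      group
    have hJ : Junct α (d :: δ') := by
      have := junct_of_norm (hαδ ▸ hnorm)
      intro a ha b hb
      apply this a ha b
      rw [hd, List.getLast?_append_of_ne_nil _ (by simp)]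
      exact hb
    have hnc : NoCan (Wrd3 α (d :: δ') (g' :: γ')) := by
      apply noCan_Wrd3 hJ
      intro d1 hd1 g1 hg1
      simp at hd1 hg1
      subst hd1
      subst hg1
      exact hne
    have hw1 : (g * wd γ).toWord = Wrd3 α (d :: δ') (g' :: γ') := by
      rw [he2, toWord_mk_of_noCan hnc]
    have hw2 : (g * wd γ).toWord = Wrd α' β' := by
      rw [he, wd_sub_eq_mk]
      apply toWord_mk_of_norm
      rw [← wd_sub_eq_mk, ← he, hn]
      simp [Wrd, posL, negL]
    exact Wrd3_ne_Wrd (by simp) (by simp) (hw1 ▸ hw2)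

/-- backward structure lemma -/
lemma xi_bwd [TopologicalSpace Λ] {X : Set (ℕ → Λ)} (hX : IsSubshift X) {x : ℕ → Λ}
    (hx : x ∈ X) {g : FreeGroup Λ} {α δ : List Λ}
    (hαδ : g = wd α * (wd δ)⁻¹) (hnorm : FreeGroup.norm g = α.length + δ.length)
    (hpref : Pref α x) (hz : tail x α.length ∈ follower X α ∩ follower X δ)
    {γ : List Λ} (hγ : Pref γ (cat δ (tail x α.length))) :
    g * wd γ ∈ xiSet X x := by
  set z := tail x α.length with hzdef
  by_cases hlen : γ.length ≤ δ.length
  · obtain ⟨δ'', rfl⟩ : γ <+: δ := prefix_of_pref_agree hγ (pref_cat _ _) hlen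
    refine ⟨α, δ'', ?_, ?_, hpref, ?_, ?_⟩
    · rw [hαδ, wd_append, mul_inv_rev]
      group
    · have he : g * wd γ = wd α * (wd δ'')⁻¹ := by
        rw [hαδ, wd_append, mul_inv_rev]
        group
      rw [he]
      apply norm_wd_sub_of_junct
      cases hδ'' : δ'' with
      | nil => exact junct_nil_right _
      | cons e l =>
          subst hδ''
          exact junct_suffix (junct_of_norm (hαδ ▸ hnorm)) rfl
    · exact hz.1
    · constructor
      · exact hz.1.1
      · have h1 : cat (γ ++ δ'') z ∈ X := hz.2.2
        rw [cat_append] at h1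
        have := tail_shift hX h1 γ.length
        rwa [tail_cat] at this
  · push_neg at hlen
    obtain ⟨γ', rfl⟩ : δ <+: γ := prefix_of_pref_agree (pref_cat _ _) hγ (by omega)
    have hγ' : Pref γ' z := by
      have := (pref_append.1 hγ).2
      rwa [tail_cat] at this
    have hpx : Pref (α ++ γ') x := by
      rw [pref_append]
      exact ⟨hpref, hγ'⟩
    refine ⟨α ++ γ', [], ?_, ?_, hpx, ?_, ?_⟩
    · rw [hαδ, wd_append, wd_append, wd_nil]
      group
    · have he : g * wd (δ ++ γ') = wd (α ++ γ') * (wd [])⁻¹ := by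
        rw [hαδ, wd_append, wd_append, wd_nil]
        group
      rw [he, norm_wd_sub_of_junct (junct_nil_right _)]
    · constructor
      · have : tail x (α ++ γ').length = tail z γ'.length := by
          rw [hzdef, tail_tail]
          congr 1
          simp
        rw [this]
        exact tail_shift hX hz.1.1 _
      · rw [cat_pref_eq hpx]
        exact hx
    · constructor
      · have : tail x (α ++ γ').length = tail z γ'.length := by
          rw [hzdef, tail_tail]
          congr 1
          simp
        rw [this]
        exact tail_shift hX hz.1.1 _
      · rw [cat_nil]
        have : tail x (α ++ γ').length = tail z γ'.length := by
          rw [hzdef, tail_tail]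
          congr 1
          simp
        rw [this]
        exact tail_shift hX hz.1.1 _

end XiLemmas

section StemLemmas
variable {Λ : Type} [DecidableEq Λ]

lemma xi_stemAt [TopologicalSpace Λ] {X : Set (ℕ → Λ)} (hX : IsSubshift X) {x : ℕ → Λ}
    (hx : x ∈ X) {g : FreeGroup Λ} {α δ : List Λ}
    (hαδ : g = wd α * (wd δ)⁻¹) (hnorm : FreeGroup.norm g = α.length + δ.length)
    (hpref : Pref α x) (hz : tail x α.length ∈ follower X α ∩ follower X δ) :
    IsStemAt (xiB X x) g (cat δ (tail x α.length)) := by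
  unfold IsStemAt
  ext h
  simp only [Set.mem_inter_iff, Set.mem_setOf_eq]
  constructor
  · rintro ⟨hh, γ, rfl⟩
    exact ⟨γ, rfl, xi_fwd hX hαδ hnorm (xiB_eq_true.1 hh)⟩
  · rintro ⟨γ, rfl, hp⟩
    exact ⟨xiB_eq_true.2 (xi_bwd hX hx hαδ hnorm hpref hz hp), γ, rfl⟩

lemma stem_unique {ξ : FreeGroup Λ → Bool} {g : FreeGroup Λ} {y y' : ℕ → Λ}
    (h1 : IsStemAt ξ g y) (h2 : IsStemAt ξ g y') : y = y' := by
  funext i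
  set γ : List Λ := List.ofFn (fun j : Fin (i + 1) => y j) with hγdef
  have hlen : γ.length = i + 1 := by simp [hγdef]
  have hmem : g * wd γ ∈ {h | ξ h = true} ∩ {h | ∃ a : List Λ, h = g * wd a} := by
    rw [h1]
    exact ⟨γ, rfl, pref_ofFn _⟩
  rw [h2] at hmem
  obtain ⟨γ', he, hp⟩ := hmem
  have : γ = γ' := wd_inj (mul_left_cancel he)
  subst this
  have e1 : y' i = γ[i]'(by rw [hlen]; omega) := hp i (by rw [hlen]; omega)
  have e2 : y i = γ[i]'(by rw [hlen]; omega) := pref_ofFn (y := y) (i + 1) i (by rw [hlen]; omega)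
  rw [e2, e1]

lemma stemAt_prefix_mem {ξ : FreeGroup Λ → Bool} {g : FreeGroup Λ} {y : ℕ → Λ}
    (h : IsStemAt ξ g y) (n : ℕ) :
    ξ (g * wd (List.ofFn fun j : Fin n => y j)) = true := by
  have hmem : g * wd (List.ofFn fun j : Fin n => y j) ∈
      {h | ∃ a : List Λ, h = g * wd a ∧ Pref a y} :=
    ⟨_, rfl, pref_ofFn _⟩
  rw [← h] at hmem
  exact hmem.1

end StemLemmas

section MainAux
variable {Λ : Type} [DecidableEq Λ]

lemma gbeta_decomp {g : FreeGroup Λ} {α δ β α₀ c t : List Λ}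
    (hαδ : g = wd α * (wd δ)⁻¹) (hα : α = α₀ ++ t) (hc : β ++ δ = c ++ t) :
    g * (wd β)⁻¹ = wd α₀ * (wd c)⁻¹ := by
  have e3 : wd β * wd δ = wd c * wd t := by rw [← wd_append, ← wd_append, hc]
  have e4 : (wd δ)⁻¹ * (wd β)⁻¹ = (wd t)⁻¹ * (wd c)⁻¹ := by
    rw [← mul_inv_rev, ← mul_inv_rev, e3]
  calc g * (wd β)⁻¹ = wd α * ((wd δ)⁻¹ * (wd β)⁻¹) := by rw [hαδ]; group
    _ = wd (α₀ ++ t) * ((wd t)⁻¹ * (wd c)⁻¹) := by rw [e4, ← hα]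
    _ = wd α₀ * (wd c)⁻¹ := by rw [wd_append]; group

end MainAux

end Aux

/-- if `gβ⁻¹ ∈ ξ` then the stem of `ξ` at `g` lies in `F_β`; the converse
holds when `ξ = ξ_x` for some `x ∈ X`. -/
theorem stem_at_follower {Λ : Type} [Fintype Λ] [Nonempty Λ] [DecidableEq Λ]
    [TopologicalSpace Λ] [DiscreteTopology Λ]
    (X : Set (ℕ → Λ)) (hX : IsSubshift X)
    (ξ : FreeGroup Λ → Bool) (hξ : ξ ∈ Omega X)
    (g : FreeGroup Λ) (hg : ξ g = true) (β : List Λ) :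
    (ξ (g * (wd β)⁻¹) = true → ∀ y : ℕ → Λ, IsStemAt ξ g y → y ∈ follower X β) ∧
    (∀ x ∈ X, ξ = xiB X x →
       (∃ y : ℕ → Λ, IsStemAt ξ g y ∧ y ∈ follower X β) →
       ξ (g * (wd β)⁻¹) = true) := by
  constructor
  · intro hgb y hy
    have key : ∀ n : ℕ, ∃ w, w ∈ X ∧ cat β w ∈ X ∧ ∀ i < n, w i = y i := by
      intro n
      set γ : List Λ := List.ofFn fun j : Fin n => y j with hγdef
      obtain ⟨x, hx, hagree⟩ := omega_approx hξ {g, g * (wd β)⁻¹, g * wd γ}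
      have hg1 : g ∈ xiSet X x := xiB_eq_true.1 (by rw [hagree g (by simp)]; exact hg)
      obtain ⟨α, δ, hαδ, hnorm, hpref, hz⟩ := hg1
      set z := tail x α.length with hzdef
      have hg2 : g * wd γ ∈ xiSet X x := xiB_eq_true.1
        (by rw [hagree _ (by simp)]; exact stemAt_prefix_mem hy n)
      have hpγ : Pref γ (cat δ z) := xi_fwd hX hαδ hnorm hg2
      have hg3 : g * (wd β)⁻¹ ∈ xiSet X x := xiB_eq_true.1
        (by rw [hagree _ (by simp)]; exact hgb)
      obtain ⟨α₀, c, t, hα, hc, hJ⟩ := suffix_split α (β ++ δ)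
      have he2 : g * (wd β)⁻¹ = wd α₀ * (wd c)⁻¹ := gbeta_decomp hαδ hα hc
      have hn2 : FreeGroup.norm (g * (wd β)⁻¹) = α₀.length + c.length := by
        rw [he2]; exact norm_wd_sub_of_junct hJ
      obtain ⟨α'', β'', he'', hn'', hp'', hz''⟩ := hg3
      obtain ⟨ha'', hb''⟩ := decomp_unique he'' hn'' he2 hn2
      subst ha''; subst hb''
      have hxz : cat α z = x := cat_pref_eq hpref
      have htz : tail x α''.length = cat t z := by
        have h5 : x = cat α'' (cat t z) := by rw [← cat_append, ← hα, hxz]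
        rw [h5, tail_cat]
      refine ⟨cat δ z, hz.2.2, ?_, ?_⟩
      · have heq : cat β (cat δ z) = cat β'' (tail x α''.length) := by
          rw [← cat_append, hc, cat_append, htz]
        rw [heq]
        exact hz''.2.2
      · intro i hi
        have h6 := hpγ i (by simp [hγdef]; omega)
        have h7 : γ[i]'(by simp [hγdef]; omega) = y i := by
          simp [hγdef]
        rw [h6, h7]
    constructor
    · apply closed_approx hX.2.1
      intro n
      obtain ⟨w, hw1, -, hw3⟩ := key n
      exact ⟨w, hw1, hw3⟩
    · apply closed_approx hX.2.1
      intro n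
      obtain ⟨w, -, hw2, hw3⟩ := key n
      refine ⟨cat β w, hw2, ?_⟩
      intro i hi
      by_cases h : i < β.length
      · rw [cat_eval_lt h, cat_eval_lt h]
      · rw [cat_eval_ge (by omega), cat_eval_ge (by omega)]
        exact hw3 _ (by omega)
  · rintro x hx rfl ⟨y, hy, hyF⟩
    have hg1 : g ∈ xiSet X x := xiB_eq_true.1 hg
    obtain ⟨α, δ, hαδ, hnorm, hpref, hz⟩ := hg1
    set z := tail x α.length with hzdef
    have hstem := xi_stemAt hX hx hαδ hnorm hpref hz
    have hy' : y = cat δ z := stem_unique hy hstem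
    obtain ⟨α₀, c, t, hα, hc, hJ⟩ := suffix_split α (β ++ δ)
    have he2 : g * (wd β)⁻¹ = wd α₀ * (wd c)⁻¹ := gbeta_decomp hαδ hα hc
    have hn2 : FreeGroup.norm (g * (wd β)⁻¹) = α₀.length + c.length := by
      rw [he2]; exact norm_wd_sub_of_junct hJ
    have hxz : cat α z = x := cat_pref_eq hpref
    have htz : tail x α₀.length = cat t z := by
      have h5 : x = cat α₀ (cat t z) := by rw [← cat_append, ← hα, hxz]
      rw [h5, tail_cat]
    apply xiB_eq_true.2
    refine ⟨α₀, c, he2, hn2, pref_of_prefix ⟨t, hα.symm⟩ hpref, ?_, ?_⟩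
    · refine ⟨tail_shift hX hx _, ?_⟩
      rw [htz, ← cat_append, ← hα, hxz]
      exact hx
    · refine ⟨tail_shift hX hx _, ?_⟩
      have heq : cat c (tail x α₀.length) = cat β y := by
        rw [htz, ← cat_append, ← hc, cat_append, ← hy']
      rw [heq]
      exact hyF.2

end SubshiftPaper
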